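/- Sobolev bound uniform in the period: there exists C_p for each p ∈ [2,6] such that for all R, L ≥ 1 and all f ∈ H¹_loc(ℝ³;ℂ) satisfying the magnetic periodicity conditions of the space E^{3D}_{R,L}, one has ‖f‖_{L^p(Q_{R,L})} ≤ C_p ‖f‖_{H¹(Q_{R,L})}, where Q_{R,L} = (-R/2,R/2)² × (-L/2,L/2). -/

import Mathlib

open MeasureTheory Complex

noncomputable section

/-- Three-dimensional Euclidean space. -/
abbrev V3 := EuclideanSpace ℝ (Fin 3)

/-- The box `Q_{R,L} = (-R/2,R/2)² × (-L/2,L/2)`. -/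
def boxRL (R L : ℝ) : Set V3 := {x | |x 0| < R / 2 ∧ |x 1| < R / 2 ∧ |x 2| < L / 2}

open scoped ENNReal

abbrev P3 := Fin 3 → ℝ

lemma hasFDerivAt_pow4 {F : P3 → ℂ} (hF : ContDiff ℝ 1 F) (y : P3) :
    HasFDerivAt (fun z => ‖F z‖^4)
      ((2 * ‖F y‖^2) • ((2:ℕ) • (innerSL ℝ (F y)).comp (fderiv ℝ F y))) y := by
  have hd : HasFDerivAt F (fderiv ℝ F y) y := (hF.differentiable one_ne_zero y).hasFDerivAt
  have h2 : HasFDerivAt (fun z => ‖F z‖^2) ((2:ℕ) • (innerSL ℝ (F y)).comp (fderiv ℝ F y)) y :=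
    hd.norm_sq
  have h4 := h2.mul h2
  have : (fun z => ‖F z‖^4) = fun z => ‖F z‖^2 * ‖F z‖^2 := by
    funext z; ring
  rw [this]
  refine h4.congr_fderiv ?_
  ext w
  simp [smul_smul]
  ring

lemma abs_fderiv_pow4_le {F : P3 → ℂ} (hF : ContDiff ℝ 1 F) (y : P3) (v : P3) :
    |fderiv ℝ (fun z => ‖F z‖^4) y v| ≤ 4 * ‖F y‖^3 * ‖fderiv ℝ F y v‖ := by
  have h := (hasFDerivAt_pow4 hF y).fderiv
  rw [h]
  have hcs : |(inner ℝ (F y) (fderiv ℝ F y v) : ℝ)| ≤ ‖F y‖ * ‖fderiv ℝ F y v‖ :=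
    abs_real_inner_le_norm _ _
  simp only [ContinuousLinearMap.smul_apply, ContinuousLinearMap.coe_smul',
    Pi.smul_apply, ContinuousLinearMap.comp_apply, innerSL_apply_apply, smul_eq_mul]
  rw [abs_mul, abs_mul, nsmul_eq_mul, abs_mul]
  have h1 : |‖F y‖^2| = ‖F y‖^2 := abs_of_nonneg (by positivity)
  have h2 : |(2:ℝ)| = 2 := by norm_num
  have h3 : |((2:ℕ):ℝ)| = 2 := by norm_num
  rw [h1, h2, h3]
  nlinarith [norm_nonneg (F y), norm_nonneg ((fderiv ℝ F y) v), abs_nonneg (inner ℝ (F y) ((fderiv ℝ F y) v) : ℝ), mul_le_mul_of_nonneg_left hcs (by positivity : (0:ℝ) ≤ 4 * ‖F y‖^2)]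


/-- FTC line lemma on an interval of length `a ≥ 1`. -/
lemma line_bound {g : P3 → ℝ} (hg : ContDiff ℝ 1 g) (hg0 : ∀ y, 0 ≤ g y)
    {a : ℝ} (ha : 1 ≤ a) (i : Fin 3) (x : P3) (hx : x i ∈ Set.Ioo (-(a/2)) (a/2)) :
    g x ≤ ∫ t in Set.Ioo (-(a/2)) (a/2),
      (g (Function.update x i t) + |fderiv ℝ g (Function.update x i t) (Pi.single i 1)|) := by
  have ha0 : (0:ℝ) < a := lt_of_lt_of_le one_pos ha
  set S : Set ℝ := Set.Ioo (-(a/2)) (a/2) with hS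
  set φ : ℝ → ℝ := fun t => g (Function.update x i t) with hφ
  set ψ : ℝ → ℝ := fun t => fderiv ℝ g (Function.update x i t) (Pi.single i 1) with hψ
  have hgd : Differentiable ℝ g := hg.differentiable one_ne_zero
  -- derivative of φ
  have hder : ∀ t : ℝ, HasDerivAt φ (ψ t) t := by
    intro t
    exact ((hgd (Function.update x i t)).hasFDerivAt.comp_hasDerivAt t
      (hasDerivAt_update x i t))
  -- continuity
  have hupc : Continuous (Function.update x i) := (contDiff_update (𝕜 := ℝ) 1 x i).continuous
  have hφc : Continuous φ := hg.continuous.comp hupc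
  have hψc : Continuous ψ := by
    have h1 : Continuous (fun y : P3 => fderiv ℝ g y (Pi.single i 1)) :=
      (hg.continuous_fderiv one_ne_zero).clm_apply continuous_const
    exact h1.comp hupc
  -- integrability on S
  have hSsub : S ⊆ Set.Icc (-(a/2)) (a/2) := Set.Ioo_subset_Icc_self
  have hφint : IntegrableOn φ S volume :=
    (hφc.continuousOn.integrableOn_Icc).mono_set hSsub
  have hψint : IntegrableOn (fun t => |ψ t|) S volume :=
    ((hψc.abs).continuousOn.integrableOn_Icc).mono_set hSsub
  set K : ℝ := ∫ t in S, |ψ t| with hK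
  set I : ℝ := ∫ t in S, φ t with hI
  have hK0 : 0 ≤ K := setIntegral_nonneg measurableSet_Ioo (fun t _ => abs_nonneg _)
  have hI0 : 0 ≤ I := setIntegral_nonneg measurableSet_Ioo (fun t _ => hg0 _)
  -- key pointwise bound
  have key : ∀ t ∈ S, g x - K ≤ φ t := by
    intro t ht
    have hOrd : Set.OrdConnected S := Set.ordConnected_Ioo
    have hintφ' : ∀ u v : ℝ, u ∈ S → v ∈ S → IntervalIntegrable ψ volume u v :=
      fun u v _ _ => hψc.intervalIntegrable u v
    have hftc : φ (x i) - φ t = ∫ s in t..(x i), ψ s :=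
      (intervalIntegral.integral_eq_sub_of_hasDerivAt
        (fun s _ => hder s) (hψc.intervalIntegrable _ _)).symm
    have habs : |∫ s in t..(x i), ψ s| ≤ ∫ s in Set.uIoc t (x i), |ψ s| := by
      simpa using intervalIntegral.norm_integral_le_integral_norm_uIoc (f := ψ) (a := t) (b := x i)
    have hsub2 : Set.uIoc t (x i) ⊆ S := by
      exact Set.Subset.trans Set.uIoc_subset_uIcc (hOrd.uIcc_subset ht hx)
    have hle : ∫ s in Set.uIoc t (x i), |ψ s| ≤ K := by
      apply setIntegral_mono_set hψint
      · exact Filter.Eventually.of_forall fun s => abs_nonneg _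
      · exact HasSubset.Subset.eventuallyLE hsub2
    have hgx : g x = φ (x i) := by simp [hφ]
    have : g x ≤ φ t + K := by
      rw [hgx]
      have h2 : φ (x i) - φ t ≤ K := by
        rw [hftc]
        exact le_trans (le_abs_self _) (le_trans habs hle)
      linarith
    linarith
  -- integrate key over S
  have hvol : (volume S).toReal = a := by
    rw [hS, Real.volume_Ioo]; rw [ENNReal.toReal_ofReal (by linarith)]; ring
  have hconst : (g x - K) * a ≤ I := by
    have := setIntegral_mono_on (integrableOn_const (by simp [hS, Real.volume_Ioo]))
      hφint measurableSet_Ioo key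
    rw [setIntegral_const] at this
    rw [measureReal_def, hvol] at this
    rw [smul_eq_mul, mul_comm] at this
    exact this
  -- conclude
  have hfinal : g x ≤ I + K := by
    rcases le_or_gt (g x) K with h | h
    · linarith
    · nlinarith
  calc g x ≤ I + K := hfinal
    _ = ∫ t in S, (φ t + |ψ t|) := (integral_add hφint hψint).symm


lemma restrict_pi_pi (S : Fin 3 → Set ℝ) :
    Measure.pi (fun i => (volume : Measure ℝ).restrict (S i))
      = (volume : Measure (Fin 3 → ℝ)).restrict (Set.pi Set.univ S) := by
  refine Measure.pi_eq fun s hs => ?_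
  rw [Measure.restrict_apply (MeasurableSet.univ_pi hs)]
  rw [← Set.pi_inter_distrib]
  rw [volume_pi_pi]
  exact Finset.prod_congr rfl fun i _ => (Measure.restrict_apply (hs i)).symm


-- sq helper in ℝ≥0∞
lemma ennreal_add_sq_le (a b : ℝ≥0∞) : (a + b)^2 ≤ 4*a^2 + 4*b^2 := by
  rcases le_total a b with h | h
  · calc (a+b)^2 ≤ (b+b)^2 := by gcongr
      _ = 4*b^2 := by ring
      _ ≤ 4*a^2 + 4*b^2 := le_add_self
  · calc (a+b)^2 ≤ (a+a)^2 := by gcongr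
      _ = 4*a^2 := by ring
      _ ≤ 4*a^2 + 4*b^2 := le_self_add

lemma pi6 (c : Fin 3 → ℝ) (hc : ∀ i, 1 ≤ c i) (F : P3 → ℂ) (hF : ContDiff ℝ 1 F) :
    ∫ y in Set.pi Set.univ (fun i => Set.Ioo (-(c i/2)) (c i/2)), ‖F y‖^6
      ≤ 262144 * (∫ y in Set.pi Set.univ (fun i => Set.Ioo (-(c i/2)) (c i/2)),
          (‖F y‖^2 + ∑ j, ‖fderiv ℝ F y (Pi.single j 1)‖^2))^3 := by
  classical
  set S : Fin 3 → Set ℝ := fun i => Set.Ioo (-(c i/2)) (c i/2) with hSdef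
  set B : Set P3 := Set.pi Set.univ S with hBdef
  have hSm : ∀ i, MeasurableSet (S i) := fun i => measurableSet_Ioo
  have hBm : MeasurableSet B := MeasurableSet.univ_pi hSm
  set μ : Fin 3 → Measure ℝ := fun i => volume.restrict (S i) with hμdef
  set ν : Measure P3 := Measure.pi μ with hνdef
  have hν : ν = volume.restrict B := restrict_pi_pi S
  -- basic objects
  set D : P3 → ℝ := fun y => Real.sqrt (∑ j, ‖fderiv ℝ F y (Pi.single j 1)‖^2) with hDdef
  have hD0 : ∀ y, 0 ≤ D y := fun y => Real.sqrt_nonneg _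
  have hDsq : ∀ y, D y^2 = ∑ j, ‖fderiv ℝ F y (Pi.single j 1)‖^2 := fun y =>
    Real.sq_sqrt (Finset.sum_nonneg fun j _ => sq_nonneg _)
  have hfderivc : Continuous (fun y => fderiv ℝ F y) := hF.continuous_fderiv one_ne_zero
  have hDc : Continuous D := by
    apply Real.continuous_sqrt.comp
    exact continuous_finset_sum _ fun j _ => ((hfderivc.clm_apply continuous_const).norm.pow 2)
  have hDge : ∀ y i, ‖fderiv ℝ F y (Pi.single i 1)‖ ≤ D y := by
    intro y i
    rw [hDdef]
    rw [show ‖fderiv ℝ F y (Pi.single i 1)‖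
        = Real.sqrt (‖fderiv ℝ F y (Pi.single i 1)‖^2) from (Real.sqrt_sq (norm_nonneg _)).symm]
    exact Real.sqrt_le_sqrt (Finset.single_le_sum (f := fun j => ‖fderiv ℝ F y (Pi.single j 1)‖^2)
      (fun j _ => sq_nonneg _) (Finset.mem_univ i))
  -- g = ‖F‖⁴ is C¹
  set g : P3 → ℝ := fun y => ‖F y‖^4 with hgdef
  have hgC : ContDiff ℝ 1 g := by
    have h2 : ContDiff ℝ 1 (fun y => ‖F y‖^2) := hF.norm_sq ℝ
    have : g = fun y => ‖F y‖^2 * ‖F y‖^2 := by funext y; rw [hgdef]; ring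
    rw [this]; exact h2.mul h2
  have hg0 : ∀ y, 0 ≤ g y := fun y => by positivity
  have hgc : Continuous g := hgC.continuous
  have hFc : Continuous F := hF.continuous
  -- real line bound with D
  have hline : ∀ x ∈ B, ∀ i : Fin 3,
      g x ≤ ∫ t in S i, (g (Function.update x i t)
        + 4 * ‖F (Function.update x i t)‖^3 * D (Function.update x i t)) := by
    intro x hx i
    have hxi : x i ∈ S i := hx i (Set.mem_univ i)
    have h1 := line_bound hgC hg0 (hc i) i x hxi
    refine le_trans h1 ?_
    have hupc : Continuous (Function.update x i) := (contDiff_update (𝕜 := ℝ) 1 x i).continuous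
    have hsub : S i ⊆ Set.Icc (-(c i/2)) (c i/2) := Set.Ioo_subset_Icc_self
    have hint1 : IntegrableOn (fun t => g (Function.update x i t)
        + |fderiv ℝ g (Function.update x i t) (Pi.single i 1)|) (S i) volume := by
      exact (((hgc.comp hupc).add
        (((hgC.continuous_fderiv one_ne_zero).clm_apply continuous_const |>.comp hupc).abs)).continuousOn.integrableOn_Icc).mono_set hsub
    have hint2 : IntegrableOn (fun t => g (Function.update x i t)
        + 4 * ‖F (Function.update x i t)‖^3 * D (Function.update x i t)) (S i) volume := by
      exact (((hgc.comp hupc).add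
        (((continuous_const.mul ((hFc.comp hupc).norm.pow 3)).mul (hDc.comp hupc)))).continuousOn.integrableOn_Icc).mono_set hsub
    apply setIntegral_mono_on hint1 hint2 (hSm i)
    intro t ht
    have hb := abs_fderiv_pow4_le hF (Function.update x i t) (Pi.single i 1)
    have hd := hDge (Function.update x i t) i
    have h0 : (0:ℝ) ≤ 4 * ‖F (Function.update x i t)‖^3 := by positivity
    have : |fderiv ℝ g (Function.update x i t) (Pi.single i 1)|
        ≤ 4 * ‖F (Function.update x i t)‖^3 * D (Function.update x i t) := by
      refine le_trans hb ?_
      exact mul_le_mul_of_nonneg_left hd h0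
    linarith
  -- ennreal objects
  set u : P3 → ℝ≥0∞ := fun y => ENNReal.ofReal ‖F y‖ with hudef
  set d : P3 → ℝ≥0∞ := fun y => ENNReal.ofReal (D y) with hddef
  set h : P3 → ℝ≥0∞ := fun y => u y^3 * (u y + 4 * d y) with hhdef
  have hum : Measurable u := (ENNReal.measurable_ofReal.comp hFc.norm.measurable)
  have hdm : Measurable d := (ENNReal.measurable_ofReal.comp hDc.measurable)
  have hhm : Measurable h := ((hum.pow_const 3).mul (hum.add (hdm.const_mul 4)))
  have hofReal : ∀ y, ENNReal.ofReal (g y + 4*‖F y‖^3*D y) = h y := by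
    intro y
    rw [ENNReal.ofReal_add (hg0 y) (by positivity), hgdef]
    have h1 : ENNReal.ofReal (‖F y‖^4) = u y^4 := by
      rw [hudef, ← ENNReal.ofReal_pow (norm_nonneg _)]
    have h2 : ENNReal.ofReal (4*‖F y‖^3*D y) = 4 * u y^3 * d y := by
      rw [mul_assoc, ENNReal.ofReal_mul (by norm_num), ENNReal.ofReal_mul (by positivity),
        ← ENNReal.ofReal_pow (norm_nonneg _)]
      simp [hudef, hddef]
      ring
    rw [h1, h2, hhdef]
    ring
  have hA : ∀ x ∈ B, ∀ i : Fin 3,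
      u x^4 ≤ ∫⁻ t, h (Function.update x i t) ∂(μ i) := by
    intro x hx i
    have hupc : Continuous (Function.update x i) := (contDiff_update (𝕜 := ℝ) 1 x i).continuous
    have hsub : S i ⊆ Set.Icc (-(c i/2)) (c i/2) := Set.Ioo_subset_Icc_self
    have hint2 : IntegrableOn (fun t => g (Function.update x i t)
        + 4 * ‖F (Function.update x i t)‖^3 * D (Function.update x i t)) (S i) volume :=
      (((hgc.comp hupc).add
        (((continuous_const.mul ((hFc.comp hupc).norm.pow 3)).mul (hDc.comp hupc)))).continuousOn.integrableOn_Icc).mono_set hsub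
    have h1 : ENNReal.ofReal (g x) ≤ ENNReal.ofReal (∫ t in S i,
        (g (Function.update x i t) + 4 * ‖F (Function.update x i t)‖^3 * D (Function.update x i t))) :=
      ENNReal.ofReal_le_ofReal (hline x hx i)
    have h2 : ENNReal.ofReal (∫ t in S i, (g (Function.update x i t)
        + 4 * ‖F (Function.update x i t)‖^3 * D (Function.update x i t)))
        = ∫⁻ t, ENNReal.ofReal (g (Function.update x i t)
          + 4 * ‖F (Function.update x i t)‖^3 * D (Function.update x i t)) ∂(μ i) := by
      rw [hμdef]
      exact MeasureTheory.ofReal_integral_eq_lintegral_ofReal hint2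
        (Filter.Eventually.of_forall fun t => by positivity)
    have h3 : (∫⁻ t, ENNReal.ofReal (g (Function.update x i t)
          + 4 * ‖F (Function.update x i t)‖^3 * D (Function.update x i t)) ∂(μ i))
        = ∫⁻ t, h (Function.update x i t) ∂(μ i) :=
      lintegral_congr fun t => hofReal _
    have h4 : ENNReal.ofReal (g x) = u x^4 := by
      rw [hgdef, hudef, ← ENNReal.ofReal_pow (norm_nonneg _)]
    rw [← h4]
    calc ENNReal.ofReal (g x) ≤ _ := h1
      _ = _ := h2
      _ = _ := h3
  -- grid-lines lemma
  have hcard : ((Fintype.card (Fin 3) : ℝ)) = 3 := by simp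
  have hp : ((Fintype.card (Fin 3) : ℝ)).HolderConjugate ((3:ℝ)/2) := by
    rw [hcard]
    constructor <;> norm_num
  have hgl := MeasureTheory.lintegral_prod_lintegral_pow_le μ hp hhm
  have hexp : (1:ℝ)/((Fintype.card (Fin 3) : ℝ) - 1) = 1/2 := by rw [hcard]; norm_num
  rw [hexp] at hgl
  have hpoint : ∀ x ∈ B, u x^6 ≤ ∏ i, (∫⁻ t, h (Function.update x i t) ∂(μ i))^((1:ℝ)/2) := by
    intro x hx
    have h1 : ∀ i : Fin 3, (u x^4 : ℝ≥0∞)^((1:ℝ)/2)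
        ≤ (∫⁻ t, h (Function.update x i t) ∂(μ i))^((1:ℝ)/2) :=
      fun i => ENNReal.rpow_le_rpow (hA x hx i) (by norm_num)
    have h2 : ((u x^4 : ℝ≥0∞))^((1:ℝ)/2) = u x^2 := by
      rw [show (u x^4 : ℝ≥0∞) = (u x^2)^(2:ℕ) by ring, ← ENNReal.rpow_natCast (u x^2) 2,
        ← ENNReal.rpow_mul]
      norm_num
    calc u x^6 = ∏ _i : Fin 3, u x^2 := by rw [Finset.prod_const]; simp; ring
      _ ≤ ∏ i, (∫⁻ t, h (Function.update x i t) ∂(μ i))^((1:ℝ)/2) := by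
          apply Finset.prod_le_prod' 
          intro i _
          rw [← h2]
          exact h1 i
  have hX6 : ∫⁻ x, u x^6 ∂ν ≤ (∫⁻ y, h y ∂ν)^((3:ℝ)/2) := by
    refine le_trans ?_ hgl
    apply lintegral_mono_ae
    rw [hν]
    filter_upwards [ae_restrict_mem hBm] with x hx using hpoint x hx
  set X : ℝ≥0∞ := ∫⁻ x, u x^6 ∂ν with hXdef
  set T : ℝ≥0∞ := ∫⁻ y, (u y^2 + d y^2) ∂ν with hTdef
  -- Hölder
  have hHold : ∫⁻ y, h y ∂ν ≤ X^((1:ℝ)/2) * (64*T)^((1:ℝ)/2) := by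
    have hconj : Real.HolderConjugate 2 2 := by constructor <;> norm_num
    have hHo := ENNReal.lintegral_mul_le_Lp_mul_Lq ν hconj
      (hum.pow_const 3).aemeasurable (hum.add (hdm.const_mul 4)).aemeasurable
    have e1 : ∀ y, ((u y^3) * (u y + 4*d y)) = h y := fun y => rfl
    have e2 : (∫⁻ y, (u y^3)^(2:ℝ) ∂ν) = X := by
      apply lintegral_congr
      intro y
      rw [show ((2:ℝ)) = ((2:ℕ):ℝ) by norm_num, ENNReal.rpow_natCast]
      ring_nf
    have e3 : (∫⁻ y, (u y + 4*d y)^(2:ℝ) ∂ν) ≤ 64*T := by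
      have hp2 : ∀ y, (u y + 4*d y)^(2:ℝ) ≤ 64*(u y^2 + d y^2) := by
        intro y
        rw [show ((2:ℝ)) = ((2:ℕ):ℝ) by norm_num, ENNReal.rpow_natCast]
        calc (u y + 4*d y)^2 ≤ 4*u y^2 + 4*(4*d y)^2 := ennreal_add_sq_le _ _
          _ ≤ 64*(u y^2 + d y^2) := by ring_nf; gcongr <;> norm_num
      calc (∫⁻ y, (u y + 4*d y)^(2:ℝ) ∂ν) ≤ ∫⁻ y, 64*(u y^2 + d y^2) ∂ν :=
            lintegral_mono fun y => hp2 y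
        _ = 64*T := by
            rw [hTdef, lintegral_const_mul]
            exact ((hum.pow_const 2).add (hdm.pow_const 2))
    calc ∫⁻ y, h y ∂ν = ∫⁻ y, ((fun z => u z^3) * (fun z => u z + 4*d z)) y ∂ν := rfl
      _ ≤ (∫⁻ y, (u y^3)^(2:ℝ) ∂ν)^((1:ℝ)/2) * (∫⁻ y, (u y + 4*d y)^(2:ℝ) ∂ν)^((1:ℝ)/2) := hHo
      _ ≤ X^((1:ℝ)/2) * (64*T)^((1:ℝ)/2) := by
          rw [e2]
          gcongr
  -- finiteness of X
  have hXfin : X ≠ ⊤ := by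
    have hK : IsCompact (Set.pi Set.univ fun i => Set.Icc (-(c i/2)) (c i/2)) :=
      isCompact_univ_pi fun i => isCompact_Icc
    obtain ⟨M, hM⟩ := hK.exists_bound_of_continuousOn hFc.continuousOn
    set M' : ℝ := max M 0 with hM'def
    have hBK : B ⊆ Set.pi Set.univ fun i => Set.Icc (-(c i/2)) (c i/2) := by
      intro x hx i _
      exact Set.Ioo_subset_Icc_self (hx i (Set.mem_univ i))
    have hbound : ∀ x ∈ B, u x^6 ≤ ENNReal.ofReal (M'^6) := by
      intro x hx
      rw [hudef, ← ENNReal.ofReal_pow (norm_nonneg _)]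
      apply ENNReal.ofReal_le_ofReal
      apply pow_le_pow_left₀ (norm_nonneg _)
      exact le_trans (hM x (hBK hx)) (le_max_left _ _)
    have hνfin : ν Set.univ < ⊤ := by
      rw [hν, Measure.restrict_apply_univ, hBdef, volume_pi_pi]
      refine ENNReal.prod_lt_top fun i _ => ?_
      simp only [hSdef, Real.volume_Ioo]
      exact ENNReal.ofReal_lt_top
    have : X ≤ ENNReal.ofReal (M'^6) * ν Set.univ := by
      rw [hXdef]
      calc ∫⁻ x, u x^6 ∂ν ≤ ∫⁻ _x, ENNReal.ofReal (M'^6) ∂ν := by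
            apply lintegral_mono_ae
            rw [hν]
            filter_upwards [ae_restrict_mem hBm] with x hx using hbound x hx
        _ = ENNReal.ofReal (M'^6) * ν Set.univ := lintegral_const _
    exact ne_top_of_le_ne_top (ENNReal.mul_ne_top ENNReal.ofReal_ne_top hνfin.ne) this
  -- self-improvement: X ≤ (64 T)^3
  have hXle : X ≤ (64*T)^3 := by
    rcases eq_or_ne X 0 with h0 | h0
    · rw [h0]; exact zero_le
    have hstep : X ≤ X^((3:ℝ)/4) * (64*T)^((3:ℝ)/4) := by
      calc X ≤ (∫⁻ y, h y ∂ν)^((3:ℝ)/2) := hX6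
        _ ≤ (X^((1:ℝ)/2) * (64*T)^((1:ℝ)/2))^((3:ℝ)/2) :=
            ENNReal.rpow_le_rpow hHold (by norm_num)
        _ = X^((3:ℝ)/4) * (64*T)^((3:ℝ)/4) := by
            rw [ENNReal.mul_rpow_of_nonneg _ _ (by norm_num : (0:ℝ) ≤ 3/2),
              ← ENNReal.rpow_mul, ← ENNReal.rpow_mul]
            norm_num
    have hquarter : X^((1:ℝ)/4) ≤ (64*T)^((3:ℝ)/4) := by
      have hXsplit : X = X^((1:ℝ)/4) * X^((3:ℝ)/4) := by
        rw [← ENNReal.rpow_add _ _ h0 hXfin]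
        norm_num
      have h34ne0 : X^((3:ℝ)/4) ≠ 0 := (ENNReal.rpow_pos (pos_iff_ne_zero.mpr h0) hXfin).ne'
      have h34fin : X^((3:ℝ)/4) ≠ ⊤ := ENNReal.rpow_ne_top_of_nonneg (by norm_num) hXfin
      have h2 : X^((1:ℝ)/4) * X^((3:ℝ)/4) ≤ (64*T)^((3:ℝ)/4) * X^((3:ℝ)/4) := by
        calc X^((1:ℝ)/4) * X^((3:ℝ)/4) = X := hXsplit.symm
          _ ≤ X^((3:ℝ)/4) * (64*T)^((3:ℝ)/4) := hstep
          _ = (64*T)^((3:ℝ)/4) * X^((3:ℝ)/4) := mul_comm _ _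
      exact (ENNReal.mul_le_mul_iff_left h34ne0 h34fin).mp h2
    calc X = (X^((1:ℝ)/4))^((4:ℝ)) := by
          rw [← ENNReal.rpow_mul]; norm_num
      _ ≤ ((64*T)^((3:ℝ)/4))^((4:ℝ)) := ENNReal.rpow_le_rpow hquarter (by norm_num)
      _ = (64*T)^(3:ℝ) := by rw [← ENNReal.rpow_mul]; norm_num
      _ = (64*T)^3 := by rw [show ((3:ℝ)) = ((3:ℕ):ℝ) by norm_num, ENNReal.rpow_natCast]
  -- convert back to real integrals
  have hsum_eq : ∀ y : P3, ‖F y‖^2 + ∑ j, ‖fderiv ℝ F y (Pi.single j 1)‖^2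
      = ‖F y‖^2 + D y^2 := fun y => by rw [hDsq]
  have hIc : Continuous (fun y => ‖F y‖^2 + D y^2) := (hFc.norm.pow 2).add (hDc.pow 2)
  have hK : IsCompact (Set.pi Set.univ fun i => Set.Icc (-(c i/2)) (c i/2)) :=
    isCompact_univ_pi fun i => isCompact_Icc
  have hBK : B ⊆ Set.pi Set.univ fun i => Set.Icc (-(c i/2)) (c i/2) := by
    intro x hx i _
    exact Set.Ioo_subset_Icc_self (hx i (Set.mem_univ i))
  have hIint : IntegrableOn (fun y => ‖F y‖^2 + D y^2) B volume :=
    (hIc.continuousOn.integrableOn_compact hK).mono_set hBK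
  set Tr : ℝ := ∫ y in B, (‖F y‖^2 + D y^2) with hTrdef
  have hTr0 : 0 ≤ Tr := setIntegral_nonneg hBm fun y _ => by positivity
  have hT : T = ENNReal.ofReal Tr := by
    rw [hTdef, hν, hTrdef]
    rw [MeasureTheory.ofReal_integral_eq_lintegral_ofReal hIint
      (Filter.Eventually.of_forall fun y => by positivity)]
    apply lintegral_congr
    intro y
    rw [ENNReal.ofReal_add (by positivity) (by positivity), hudef, hddef,
      ← ENNReal.ofReal_pow (norm_nonneg _), ← ENNReal.ofReal_pow (hD0 y)]
  have hLHS : ∫ y in B, ‖F y‖^6 = X.toReal := by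
    rw [hXdef, hν]
    rw [MeasureTheory.integral_eq_lintegral_of_nonneg_ae (f := fun y => ‖F y‖^6)
      (Filter.Eventually.of_forall fun y => by positivity)
      ((hFc.norm.pow 6).aestronglyMeasurable)]
    congr 1
    apply lintegral_congr
    intro y
    rw [hudef, ← ENNReal.ofReal_pow (norm_nonneg _)]
  have hXle' : X ≤ ENNReal.ofReal (262144 * Tr^3) := by
    refine le_trans hXle ?_
    rw [hT, ← ENNReal.ofReal_ofNat 64, ← ENNReal.ofReal_mul (by norm_num),
      ← ENNReal.ofReal_pow (by positivity)]
    apply ENNReal.ofReal_le_ofReal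
    exact le_of_eq (by ring)
  have hgoal : ∫ y in B, ‖F y‖^6 ≤ 262144 * Tr^3 := by
    rw [hLHS]
    calc X.toReal ≤ (ENNReal.ofReal (262144 * Tr^3)).toReal :=
          ENNReal.toReal_mono ENNReal.ofReal_ne_top hXle'
      _ = 262144 * Tr^3 := ENNReal.toReal_ofReal (by positivity)
  calc ∫ y in B, ‖F y‖^6 ≤ 262144 * Tr^3 := hgoal
    _ = 262144 * (∫ y in Set.pi Set.univ (fun i => Set.Ioo (-(c i/2)) (c i/2)),
          (‖F y‖^2 + ∑ j, ‖fderiv ℝ F y (Pi.single j 1)‖^2))^3 := by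
        rw [hTrdef]
        congr 2
        apply setIntegral_congr_fun hBm
        intro y _
        exact (hsum_eq y).symm


lemma box_eq_preimage (R L : ℝ) :
    boxRL R L = ((MeasurableEquiv.toLp 2 (Fin 3 → ℝ)).symm) ⁻¹'
      (Set.pi Set.univ (fun i => Set.Ioo (-((![R, R, L] : Fin 3 → ℝ) i/2)) ((![R, R, L] : Fin 3 → ℝ) i/2))) := by
  ext x
  simp only [Set.mem_preimage, Set.mem_pi, Set.mem_univ, forall_true_left, boxRL, Set.mem_setOf_eq,
    Set.mem_Ioo]
  constructor
  · rintro ⟨h0, h1, h2⟩ i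
    fin_cases i
    · exact ⟨(abs_lt.mp h0).1, (abs_lt.mp h0).2⟩
    · exact ⟨(abs_lt.mp h1).1, (abs_lt.mp h1).2⟩
    · exact ⟨(abs_lt.mp h2).1, (abs_lt.mp h2).2⟩
  · intro h
    refine ⟨abs_lt.mpr ?_, abs_lt.mpr ?_, abs_lt.mpr ?_⟩
    · have := h 0; simpa using this
    · have := h 1; simpa using this
    · have := h 2; simpa using this


lemma box_meas (R L : ℝ) : MeasurableSet (boxRL R L) := by
  rw [box_eq_preimage R L]
  exact (MeasurableSet.univ_pi fun i => measurableSet_Ioo).preimage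
    ((MeasurableEquiv.toLp 2 (Fin 3 → ℝ)).symm).measurable

lemma box_int {R L : ℝ} (g : V3 → ℝ) (hg : Continuous g) :
    IntegrableOn g (boxRL R L) volume := by
  set c : Fin 3 → ℝ := ![R, R, L] with hcdef
  set K : Set V3 := (EuclideanSpace.equiv (Fin 3) ℝ).toHomeomorph ⁻¹'
    (Set.pi Set.univ fun i => Set.Icc (-(c i/2)) (c i/2)) with hKdef
  have hK : IsCompact K := (Homeomorph.isCompact_preimage _).mpr
    (isCompact_univ_pi fun i => isCompact_Icc)
  have hsub : boxRL R L ⊆ K := by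
    rw [box_eq_preimage R L, hKdef]
    exact Set.preimage_mono (Set.pi_mono fun i _ => Set.Ioo_subset_Icc_self)
  exact (hg.continuousOn.integrableOn_compact hK).mono_set hsub

lemma core6 {R L : ℝ} (hR : 1 ≤ R) (hL : 1 ≤ L) (f : V3 → ℂ) (hf : ContDiff ℝ 1 f) :
    ∫ x in boxRL R L, ‖f x‖^6
      ≤ 262144 * (∫ x in boxRL R L,
          (‖f x‖^2 + ∑ j, ‖fderiv ℝ f x (EuclideanSpace.single j (1:ℝ))‖^2))^3 := by
  classical
  set c : Fin 3 → ℝ := ![R, R, L] with hcdef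
  have hc : ∀ i, 1 ≤ c i := by
    intro i; fin_cases i <;> simpa [hcdef]
  set e := (MeasurableEquiv.toLp 2 (Fin 3 → ℝ)).symm with hedef
  set Lq := (EuclideanSpace.equiv (Fin 3) ℝ).symm with hLdef
  set F : P3 → ℂ := fun y => f (Lq y) with hFdef
  have hFC : ContDiff ℝ 1 F := hf.comp Lq.contDiff
  have hfe : ∀ x : V3, F (e x) = f x := fun x => rfl
  have hfd : ∀ x : V3, ∀ j : Fin 3,
      fderiv ℝ F (e x) (Pi.single j 1) = fderiv ℝ f x (EuclideanSpace.single j (1:ℝ)) := by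
    intro x j
    have hcomp : fderiv ℝ (f ∘ Lq) (e x) = (fderiv ℝ f (Lq (e x))).comp (Lq : P3 →L[ℝ] V3) :=
      Lq.comp_right_fderiv
    have : F = f ∘ Lq := rfl
    rw [this, hcomp]
    rfl
  set A := Set.pi Set.univ (fun i => Set.Ioo (-(c i/2)) (c i/2)) with hAdef
  have hbox : boxRL R L = e ⁻¹' A := box_eq_preimage R L
  have hvp : MeasurePreserving e volume volume := EuclideanSpace.volume_preserving_symm_measurableEquiv_toLp _
  have hemb : MeasurableEmbedding (⇑e) := e.measurableEmbedding
  have htrans : ∀ G : P3 → ℝ, ∫ x in boxRL R L, G (e x) = ∫ y in A, G y := by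
    intro G
    rw [hbox]
    exact hvp.setIntegral_preimage_emb hemb G A
  have h1 : ∫ x in boxRL R L, ‖f x‖^6 = ∫ y in A, ‖F y‖^6 := by
    rw [← htrans (fun y => ‖F y‖^6)]
    rfl
  have h2 : ∫ x in boxRL R L, (‖f x‖^2 + ∑ j, ‖fderiv ℝ f x (EuclideanSpace.single j (1:ℝ))‖^2)
      = ∫ y in A, (‖F y‖^2 + ∑ j, ‖fderiv ℝ F y (Pi.single j 1)‖^2) := by
    rw [← htrans (fun y => ‖F y‖^2 + ∑ j, ‖fderiv ℝ F y (Pi.single j 1)‖^2)]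
    apply setIntegral_congr_fun
      (by rw [hbox]; exact (MeasurableSet.univ_pi fun i => measurableSet_Ioo).preimage e.measurable)
    intro x _
    simp only
    rw [hfe]
    congr 1
    exact Finset.sum_congr rfl fun j _ => by rw [hfd x j]
  rw [h1, h2]
  exact pi6 c hc F hFC


lemma rpow_le_sq_add_six {t : ℝ} (ht : 0 ≤ t) {p : ℝ} (hp2 : 2 ≤ p) (hp6 : p ≤ 6) :
    t ^ p ≤ t^2 + t^6 := by
  rcases eq_or_lt_of_le ht with h0 | h0
  · rw [← h0, Real.zero_rpow (by linarith)]
    positivity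
  rcases le_total t 1 with h1 | h1
  · have : t ^ p ≤ t ^ (2:ℝ) := Real.rpow_le_rpow_of_exponent_ge h0 h1 hp2
    rw [show ((2:ℝ)) = ((2:ℕ):ℝ) by norm_num, Real.rpow_natCast] at this
    nlinarith [pow_nonneg ht 6]
  · have : t ^ p ≤ t ^ (6:ℝ) := Real.rpow_le_rpow_of_exponent_le h1 hp6
    rw [show ((6:ℝ)) = ((6:ℕ):ℝ) by norm_num, Real.rpow_natCast] at this
    nlinarith [pow_nonneg ht 2]


/-- uniform Sobolev bound for the magnetic-periodic space `E^{3D}_{R,L}`.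
For each `p ∈ [2,6]` there is `C_p` independent of the periods such that, for all
`R, L ≥ 1` and every `f ∈ H¹_loc(ℝ³;ℂ)` satisfying the magnetic periodicity conditions,
`‖f‖_{L^p(Q_{R,L})} ≤ C_p ‖f‖_{H¹(Q_{R,L})}`. -/
theorem stmt_19 :
    ∀ p ∈ Set.Icc (2 : ℝ) 6, ∃ Cp > (0 : ℝ), ∀ R ≥ (1 : ℝ), ∀ L ≥ (1 : ℝ),
      ∀ f : V3 → ℂ, ContDiff ℝ 1 f →
      (∀ x : V3, f (x + R • EuclideanSpace.single 0 (1 : ℝ))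
          = Complex.exp (-Complex.I * (R : ℂ) * ((x 1 : ℝ) : ℂ) / 2) * f x) →
      (∀ x : V3, f (x + R • EuclideanSpace.single 1 (1 : ℝ))
          = Complex.exp (Complex.I * (R : ℂ) * ((x 0 : ℝ) : ℂ) / 2) * f x) →
      (∀ x : V3, f (x + L • EuclideanSpace.single 2 (1 : ℝ)) = f x) →
      (∫ x in boxRL R L, ‖f x‖ ^ p) ^ (1 / p)
        ≤ Cp * Real.sqrt (∫ x in boxRL R L,
            (‖f x‖ ^ 2 + ∑ j, ‖fderiv ℝ f x (EuclideanSpace.single j 1)‖ ^ 2)) := by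
  rintro p ⟨hp2, hp6⟩
  refine ⟨262145, by norm_num, ?_⟩
  intro R hR L hL f hf _ _ _
  have hp0 : (0:ℝ) < p := by linarith
  have hfc : Continuous f := hf.continuous
  have hfdc : Continuous (fun x : V3 => fderiv ℝ f x) := hf.continuous_fderiv one_ne_zero
  set E : V3 → ℝ := fun x => ‖f x‖^2 + ∑ j, ‖fderiv ℝ f x (EuclideanSpace.single j (1:ℝ))‖^2
    with hEdef
  have hEc : Continuous E := (hfc.norm.pow 2).add
    (continuous_finset_sum _ fun j _ => ((hfdc.clm_apply continuous_const).norm.pow 2))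
  have hE0 : ∀ x, 0 ≤ E x := fun x => by positivity
  have hEint : IntegrableOn E (boxRL R L) volume := box_int E hEc
  set Sint : ℝ := ∫ x in boxRL R L, E x with hSdef
  have hSint0 : 0 ≤ Sint := setIntegral_nonneg (box_meas R L) fun x _ => hE0 x
  rcases eq_or_lt_of_le hSint0 with hzero | hpos
  · -- degenerate case
    have hae : (fun x => E x) =ᵐ[volume.restrict (boxRL R L)] 0 :=
      (integral_eq_zero_iff_of_nonneg_ae (Filter.Eventually.of_forall hE0) hEint).mp hzero.symm
    have hae2 : (fun x => ‖f x‖ ^ p) =ᵐ[volume.restrict (boxRL R L)] 0 := by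
      filter_upwards [hae] with x hx
      have hfx : ‖f x‖ = 0 := by
        have h1 : ‖f x‖^2 + ∑ j, ‖fderiv ℝ f x (EuclideanSpace.single j (1:ℝ))‖^2 = 0 := hx
        have h2 : (0:ℝ) ≤ ∑ j, ‖fderiv ℝ f x (EuclideanSpace.single j (1:ℝ))‖^2 :=
          Finset.sum_nonneg fun j _ => sq_nonneg _
        nlinarith [sq_nonneg ‖f x‖, norm_nonneg (f x)]
      simp [hfx, Real.zero_rpow hp0.ne']
    have : ∫ x in boxRL R L, ‖f x‖ ^ p = 0 := integral_eq_zero_of_ae hae2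
    rw [this, Real.zero_rpow (by positivity : (1:ℝ)/p ≠ 0)]
    positivity
  · -- main case
    set σ : ℝ := Real.sqrt Sint with hσdef
    have hσpos : 0 < σ := Real.sqrt_pos.mpr hpos
    have hσsq : σ^2 = Sint := Real.sq_sqrt hSint0
    set g : V3 → ℂ := fun x => (σ⁻¹ : ℝ) • f x with hgdef
    have hgC : ContDiff ℝ 1 g := hf.const_smul _
    have hgnorm : ∀ x, ‖g x‖ = σ⁻¹ * ‖f x‖ := by
      intro x
      rw [hgdef]
      simp [norm_smul, abs_of_pos (inv_pos.mpr hσpos)]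
      left; exact hσpos.le
    have hgfderiv : ∀ x j, ‖fderiv ℝ g x (EuclideanSpace.single j (1:ℝ))‖
        = σ⁻¹ * ‖fderiv ℝ f x (EuclideanSpace.single j (1:ℝ))‖ := by
      intro x j
      have : fderiv ℝ g x = (σ⁻¹ : ℝ) • fderiv ℝ f x :=
        fderiv_fun_const_smul (hf.differentiable one_ne_zero x) _
      rw [this]
      simp [norm_smul, abs_of_pos (inv_pos.mpr hσpos)]
      left; exact hσpos.le
    set Eg : V3 → ℝ := fun x => ‖g x‖^2 + ∑ j, ‖fderiv ℝ g x (EuclideanSpace.single j (1:ℝ))‖^2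
      with hEgdef
    have hEg : ∀ x, Eg x = σ⁻¹^2 * E x := by
      intro x
      rw [hEgdef, hEdef]
      simp only [hgnorm, hgfderiv, mul_pow, Finset.mul_sum]
      rw [mul_add, Finset.mul_sum]
    have hEgint : ∫ x in boxRL R L, Eg x = 1 := by
      rw [show (fun x => Eg x) = fun x => σ⁻¹^2 * E x from funext hEg]
      rw [MeasureTheory.integral_const_mul, ← hSdef, inv_pow, hσsq, inv_mul_cancel₀ hpos.ne']
    -- core Sobolev bound for g
    have hgc : Continuous g := hgC.continuous
    have hgdc : Continuous (fun x : V3 => fderiv ℝ g x) := hgC.continuous_fderiv one_ne_zero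
    have hEgc : Continuous Eg := (hgc.norm.pow 2).add
      (continuous_finset_sum _ fun j _ => ((hgdc.clm_apply continuous_const).norm.pow 2))
    have h6 : ∫ x in boxRL R L, ‖g x‖^6 ≤ 262144 := by
      have := core6 hR hL g hgC
      rw [← hEgdef] at this
      rw [hEgint] at this
      simpa using this
    have hg2 : ∫ x in boxRL R L, ‖g x‖^2 ≤ 1 := by
      rw [← hEgint]
      apply setIntegral_mono_on (box_int _ (hgc.norm.pow 2)) (box_int _ hEgc) (box_meas R L)
      intro x _
      rw [hEgdef]
      simp only
      have : (0:ℝ) ≤ ∑ j, ‖fderiv ℝ g x (EuclideanSpace.single j (1:ℝ))‖^2 :=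
        Finset.sum_nonneg fun j _ => sq_nonneg _
      linarith [show ((fun x => ‖g x‖) ^ 2) x = ‖g x‖^2 from rfl]
    have hint26 : IntegrableOn (fun x => ‖g x‖^2 + ‖g x‖^6) (boxRL R L) volume :=
      box_int _ ((hgc.norm.pow 2).add (hgc.norm.pow 6))
    have hgp : IntegrableOn (fun x => ‖g x‖^p) (boxRL R L) volume := by
      apply Integrable.mono' hint26
        ((hgc.norm.measurable.pow_const p).aestronglyMeasurable)
      filter_upwards with x
      rw [Real.norm_eq_abs, _root_.abs_of_nonneg (Real.rpow_nonneg (norm_nonneg _) p)]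
      exact rpow_le_sq_add_six (norm_nonneg _) hp2 hp6
    set A : ℝ := ∫ x in boxRL R L, ‖g x‖^p with hAdef
    have hA0 : 0 ≤ A := setIntegral_nonneg (box_meas R L)
      fun x _ => Real.rpow_nonneg (norm_nonneg _) p
    have hApb : A ≤ 262145 := by
      have h1 : A ≤ ∫ x in boxRL R L, (‖g x‖^2 + ‖g x‖^6) := by
        apply setIntegral_mono_on hgp hint26 (box_meas R L)
        intro x _
        exact rpow_le_sq_add_six (norm_nonneg _) hp2 hp6
      have h2 : ∫ x in boxRL R L, (‖g x‖^2 + ‖g x‖^6)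
          = (∫ x in boxRL R L, ‖g x‖^2) + ∫ x in boxRL R L, ‖g x‖^6 :=
        integral_add (box_int _ (hgc.norm.pow 2)) (box_int _ (hgc.norm.pow 6))
      linarith
    -- rescale back
    have hfg : ∀ x, ‖f x‖ ^ p = σ^p * ‖g x‖^p := by
      intro x
      have h1 : ‖f x‖ = σ * ‖g x‖ := by
        rw [hgnorm x]
        field_simp
      rw [h1, Real.mul_rpow hσpos.le (norm_nonneg _)]
    have hIf : ∫ x in boxRL R L, ‖f x‖ ^ p = σ^p * A := by
      rw [hAdef, ← MeasureTheory.integral_const_mul]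
      exact setIntegral_congr_fun (box_meas R L) fun x _ => hfg x
    rw [hIf]
    have hσp0 : (0:ℝ) ≤ σ^p := Real.rpow_nonneg hσpos.le p
    rw [Real.mul_rpow hσp0 hA0]
    have hσ1 : (σ^p)^((1:ℝ)/p) = σ := by
      rw [← Real.rpow_mul hσpos.le, mul_one_div_cancel hp0.ne', Real.rpow_one]
    rw [hσ1]
    have hAle : A^((1:ℝ)/p) ≤ 262145 := by
      calc A^((1:ℝ)/p) ≤ (262145:ℝ)^((1:ℝ)/p) :=
            Real.rpow_le_rpow hA0 hApb (by positivity)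
        _ ≤ (262145:ℝ)^(1:ℝ) := by
            apply Real.rpow_le_rpow_of_exponent_le (by norm_num)
            rw [div_le_one hp0]; linarith
        _ = 262145 := Real.rpow_one _
    have hfinal : σ * A^((1:ℝ)/p) ≤ 262145 * σ :=
      calc σ * A^((1:ℝ)/p) ≤ σ * 262145 := mul_le_mul_of_nonneg_left hAle hσpos.le
        _ = 262145 * σ := mul_comm _ _
    exact hfinal
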